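/- For a finite configuration of balls and any α > 0, the sum over all balls of the length of the α-dilated sphere S(x,R+α) outside the α-parallel set of the union of the remaining balls equals the perimeter of the α-parallel set of the union of all balls. -/

import Mathlib

open MeasureTheory Metric
open scoped ENNReal Classical Pointwise

local notation "Plane" => EuclideanSpace ℝ (Fin 2)

lemma my_biUnion_add {ι : Type*} (s : Finset ι) (f : ι → Set Plane) (t : Set Plane) :
    (⋃ i ∈ s, f i) + t = ⋃ i ∈ s, (f i + t) := by
  ext x
  simp only [Set.mem_add, Set.mem_iUnion]
  constructor
  · rintro ⟨y, ⟨i, hi, hy⟩, z, hz, rfl⟩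
    exact ⟨i, hi, y, hy, z, hz, rfl⟩
  · rintro ⟨i, hi, y, hy, z, hz, rfl⟩
    exact ⟨y, ⟨i, hi, hy⟩, z, hz, rfl⟩

/-- For a finite configuration of balls in general position and any α > 0,
the sum over all balls of the length of the α-dilated sphere `S(x,R+α)` outside the
α-parallel set (Minkowski sum with `B(0,α)`) of the union of the remaining balls equals
the perimeter of the α-parallel set of the union of all balls. -/
theorem stmt_1 (ω : Finset (Plane × ℝ)) (α : ℝ) (hα : 0 < α)
    (hpos : ∀ p ∈ ω, 0 < p.2)
    (hgen : ∀ p ∈ ω, ∀ q ∈ ω, p ≠ q →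
      (sphere p.1 (p.2 + α) ∩ sphere q.1 (q.2 + α)).Finite) :
    ∑ p ∈ ω, μH[1] (sphere p.1 (p.2 + α) ∩
        (((⋃ q ∈ ω.erase p, closedBall q.1 q.2) + closedBall (0 : Plane) α))ᶜ)
      = μH[1] (frontier ((⋃ p ∈ ω, closedBall p.1 p.2) + closedBall (0 : Plane) α)) := by
  have hatoms : NullSingletonClass (μH[1] : Measure Plane) := Measure.nullSingletonClass_hausdorff _ one_pos
  have hnull : ∀ s : Set Plane, s.Finite → μH[1] s = 0 := fun s hs => hs.measure_zero _
  have hball : ∀ p : Plane × ℝ, p ∈ ω → closedBall p.1 p.2 + closedBall (0 : Plane) α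
      = closedBall p.1 (p.2 + α) := by
    intro p hp
    rw [closedBall_add_closedBall (hpos p hp).le hα.le, add_zero]
  -- rewrite Minkowski sums
  have hrw : ∀ p ∈ ω, (⋃ q ∈ ω.erase p, closedBall q.1 q.2) + closedBall (0 : Plane) α
      = ⋃ q ∈ ω.erase p, closedBall q.1 (q.2 + α) := by
    intro p hp
    rw [my_biUnion_add]
    exact Set.iUnion₂_congr fun q hq => hball q (Finset.mem_of_mem_erase hq)
  have hrwU : (⋃ p ∈ ω, closedBall p.1 p.2) + closedBall (0 : Plane) α
      = ⋃ p ∈ ω, closedBall p.1 (p.2 + α) := by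
    rw [my_biUnion_add]
    exact Set.iUnion₂_congr fun q hq => hball q hq
  set U : Set Plane := ⋃ p ∈ ω, closedBall p.1 (p.2 + α) with hU
  set C : Plane × ℝ → Set Plane := fun p => ⋃ q ∈ ω.erase p, closedBall q.1 (q.2 + α) with hC
  have hUclosed : IsClosed U :=
    Set.Finite.isClosed_biUnion ω.finite_toSet fun p _ => isClosed_closedBall
  have hCclosed : ∀ p, IsClosed (C p) := fun p =>
    Set.Finite.isClosed_biUnion (ω.erase p).finite_toSet fun q _ => isClosed_closedBall
  -- interior of U contains all open balls
  have hballint : ∀ p ∈ ω, ball p.1 (p.2 + α) ⊆ interior U := fun p hp =>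
    interior_maximal (fun x hx => Set.mem_biUnion hp (ball_subset_closedBall hx)) isOpen_ball
  -- key A : sphere p ∩ (C p)ᶜ ⊆ frontier U
  have keyA : ∀ p ∈ ω, sphere p.1 (p.2 + α) ∩ (C p)ᶜ ⊆ frontier U := by
    intro p hp x hx
    obtain ⟨hxs, hxc⟩ := hx
    rw [hUclosed.frontier_eq]
    refine ⟨Set.mem_biUnion hp (sphere_subset_closedBall hxs), fun hint => ?_⟩
    have hxball : x ∈ interior (closedBall p.1 (p.2 + α)) := by
      refine interior_maximal ?_ ((isOpen_interior).inter (hCclosed p).isOpen_compl)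
        ⟨hint, hxc⟩
      rintro y ⟨hy1, hy2⟩
      obtain ⟨q, hq, hyq⟩ := Set.mem_iUnion₂.1 (interior_subset hy1)
      by_cases hqp : q = p
      · exact hqp ▸ hyq
      · exact absurd (Set.mem_biUnion (Finset.mem_erase.2 ⟨hqp, hq⟩) hyq) hy2
    rw [interior_closedBall _ (ne_of_gt (add_pos (hpos p hp) hα))] at hxball
    rw [mem_sphere] at hxs
    rw [mem_ball, hxs] at hxball
    exact lt_irrefl _ hxball
  -- key B : frontier U ⊆ union of spheres
  have keyB : frontier U ⊆ ⋃ p ∈ ω, sphere p.1 (p.2 + α) := by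
    intro x hx
    rw [hUclosed.frontier_eq] at hx
    obtain ⟨hxU, hxint⟩ := hx
    obtain ⟨p, hp, hxp⟩ := Set.mem_iUnion₂.1 hxU
    refine Set.mem_biUnion hp ?_
    rw [mem_closedBall] at hxp
    rcases lt_or_eq_of_le hxp with h | h
    · exact absurd (hballint p hp (mem_ball.2 h)) hxint
    · exact h
  -- key C : frontier U ∩ sphere p ∩ C p is contained in pairwise sphere intersections
  have keyC : ∀ p ∈ ω, frontier U ∩ sphere p.1 (p.2 + α) ∩ C p ⊆
      ⋃ q ∈ ω.erase p, (sphere p.1 (p.2 + α) ∩ sphere q.1 (q.2 + α)) := by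
    intro p hp x hx
    obtain ⟨⟨hxf, hxs⟩, hxC⟩ := hx
    obtain ⟨q, hq, hxq⟩ := Set.mem_iUnion₂.1 hxC
    refine Set.mem_biUnion hq ⟨hxs, ?_⟩
    rw [mem_closedBall] at hxq
    rcases lt_or_eq_of_le hxq with h | h
    · have : x ∈ interior U := hballint q (Finset.mem_of_mem_erase hq) (mem_ball.2 h)
      rw [hUclosed.frontier_eq] at hxf
      exact absurd this hxf.2
    · exact h
  -- finiteness of pairwise sphere intersections gives null sets
  have hnullpair : ∀ p ∈ ω, ∀ q ∈ ω, p ≠ q →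
      μH[1] (sphere p.1 (p.2 + α) ∩ sphere q.1 (q.2 + α)) = 0 := fun p hp q hq hne =>
    hnull _ (hgen p hp q hq hne)
  -- the null "bad" set for each p
  have hbadnull : ∀ p ∈ ω, μH[1] (frontier U ∩ sphere p.1 (p.2 + α) ∩ C p) = 0 := by
    intro p hp
    refine measure_mono_null (keyC p hp) ?_
    refine hnull _ (Set.Finite.biUnion (ω.erase p).finite_toSet fun q hq => ?_)
    exact hgen p hp q (Finset.mem_of_mem_erase hq)
      (fun h => (Finset.mem_erase.1 hq).1 h.symm)
  -- each term equality
  have hterm : ∀ p ∈ ω, μH[1] (sphere p.1 (p.2 + α) ∩ (C p)ᶜ)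
      = μH[1] (frontier U ∩ sphere p.1 (p.2 + α)) := by
    intro p hp
    apply le_antisymm
    · exact measure_mono fun x hx => ⟨keyA p hp hx, hx.1⟩
    · have hsub : frontier U ∩ sphere p.1 (p.2 + α) ⊆
          (sphere p.1 (p.2 + α) ∩ (C p)ᶜ) ∪ (frontier U ∩ sphere p.1 (p.2 + α) ∩ C p) := by
        intro x hx
        by_cases hxC : x ∈ C p
        · exact Or.inr ⟨hx, hxC⟩
        · exact Or.inl ⟨hx.2, hxC⟩
      calc μH[1] (frontier U ∩ sphere p.1 (p.2 + α))
          ≤ μH[1] ((sphere p.1 (p.2 + α) ∩ (C p)ᶜ) ∪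
              (frontier U ∩ sphere p.1 (p.2 + α) ∩ C p)) := measure_mono hsub
        _ ≤ μH[1] (sphere p.1 (p.2 + α) ∩ (C p)ᶜ) +
              μH[1] (frontier U ∩ sphere p.1 (p.2 + α) ∩ C p) := measure_union_le _ _
        _ = μH[1] (sphere p.1 (p.2 + α) ∩ (C p)ᶜ) := by rw [hbadnull p hp, add_zero]
  -- decomposition of the frontier
  have hdecomp : frontier U = ⋃ p ∈ ω, (frontier U ∩ sphere p.1 (p.2 + α)) := by
    apply Set.Subset.antisymm
    · intro x hx
      obtain ⟨p, hp, hxp⟩ := Set.mem_iUnion₂.1 (keyB hx)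
      exact Set.mem_biUnion hp ⟨hx, hxp⟩
    · exact Set.iUnion₂_subset fun p hp => Set.inter_subset_left
  have hsum : μH[1] (frontier U) = ∑ p ∈ ω, μH[1] (frontier U ∩ sphere p.1 (p.2 + α)) := by
    conv_lhs => rw [hdecomp]
    refine measure_biUnion_finset₀ ?_ ?_
    · intro p hp q hq hne
      refine measure_mono_null (fun x hx => ?_) (hnullpair p hp q hq hne)
      exact ⟨hx.1.2, hx.2.2⟩
    · intro p hp
      exact ((isClosed_frontier.inter isClosed_sphere).measurableSet).nullMeasurableSet
  -- conclude
  calc ∑ p ∈ ω, μH[1] (sphere p.1 (p.2 + α) ∩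
        (((⋃ q ∈ ω.erase p, closedBall q.1 q.2) + closedBall (0 : Plane) α))ᶜ)
      = ∑ p ∈ ω, μH[1] (frontier U ∩ sphere p.1 (p.2 + α)) := by
        refine Finset.sum_congr rfl fun p hp => ?_
        rw [hrw p hp]
        exact hterm p hp
    _ = μH[1] (frontier U) := hsum.symm
    _ = μH[1] (frontier ((⋃ p ∈ ω, closedBall p.1 p.2) + closedBall (0 : Plane) α)) := by
        rw [hrwU]
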